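/- Let M be a binary matroid on a finite ground set E that is bipartite (every circuit of M has even cardinality), let A ⊆ E, and let N be a matroid on E whose bases are exactly the minimum-cardinality members of {A △ B : B a base of M} (i.e. N = (M*A)_min). Then N is bipartite if and only if A belongs to the bicycle space BI(M). -/

import Mathlib

open scoped symmDiff Matroid
set_option linter.unusedSectionVars false
set_option linter.unusedVariables false

namespace PaperMatroid

variable {α : Type}

/-- The contraction `M/C`, defined via duality: `M/C = (M✶ ∖ C)✶`. -/
def contr (M : Matroid α) (C : Set α) : Matroid α := (M✶ ↾ (M.E \ C))✶

/-- The rank of a set `X`: the size of a largest independent subset of `X`. -/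
noncomputable def rkFn (M : Matroid α) (X : Set α) : ℕ :=
  sSup {n : ℕ | ∃ I, M.Indep I ∧ I ⊆ X ∧ n = I.ncard}

/-- `F` is a minimum-cardinality member of the twist family `{A ∆ B : B a base of M}`. -/
def MinTwistMem (M : Matroid α) (A F : Set α) : Prop :=
  (∃ B, M.IsBase B ∧ F = A ∆ B) ∧
    ∀ F', (∃ B, M.IsBase B ∧ F' = A ∆ B) → F.ncard ≤ F'.ncard

/-- `F` is a maximum-cardinality member of the twist family `{A ∆ B : B a base of M}`. -/
def MaxTwistMem (M : Matroid α) (A F : Set α) : Prop :=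
  (∃ B, M.IsBase B ∧ F = A ∆ B) ∧
    ∀ F', (∃ B, M.IsBase B ∧ F' = A ∆ B) → F'.ncard ≤ F.ncard

/-- A circuit of `M`: a minimal dependent set. -/
def IsCircuit (M : Matroid α) (C : Set α) : Prop :=
  C ⊆ M.E ∧ ¬ M.Indep C ∧ ∀ X, X ⊂ C → M.Indep X

/-- The circuit space of `M`: all disjoint unions of circuits (including `∅`). -/
def CircuitSpace (M : Matroid α) : Set (Set α) :=
  {X | ∃ 𝒞 : Finset (Set α), (∀ C ∈ 𝒞, IsCircuit M C) ∧
        (↑𝒞 : Set (Set α)).Pairwise Disjoint ∧ X = ⋃₀ ↑𝒞}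

/-- The bicycle space of `M`: the intersection of the circuit space and the
cocircuit space (the circuit space of the dual). -/
def BicycleSpace (M : Matroid α) : Set (Set α) := CircuitSpace M ∩ CircuitSpace M✶

/-- A matroid is bipartite if every circuit has even cardinality. -/
def Bipartite (M : Matroid α) : Prop := ∀ C, IsCircuit M C → Even C.ncard

/-- A matroid is Eulerian if its ground set is a disjoint union of circuits. -/
def Eulerian (M : Matroid α) : Prop :=
  ∃ 𝒞 : Finset (Set α), (∀ C ∈ 𝒞, IsCircuit M C) ∧
    (↑𝒞 : Set (Set α)).Pairwise Disjoint ∧ ⋃₀ ↑𝒞 = M.E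

/-- Representability of a matroid over a field `K`: there is a map of the ground set
into a `K`-vector space under which a set is independent exactly when its image is
linearly independent. -/
def IsRepresentableOver (M : Matroid α) (K : Type) [Field K] : Prop :=
  ∃ (V : Type) (_ : AddCommGroup V) (_ : Module K V) (φ : α → V),
    ∀ I, I ⊆ M.E → (M.Indep I ↔ LinearIndependent K (I.restrict φ))

/-- A binary matroid: one representable over `GF(2)`. -/
def Binary (M : Matroid α) : Prop := IsRepresentableOver M (ZMod 2)


variable {S T : Set α}

lemma ncard_symmDiff_add (S T : Set α) (hS : S.Finite) (hT : T.Finite) :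
    (S ∆ T).ncard + 2 * (S ∩ T).ncard = S.ncard + T.ncard := by
  have h1 : S ∆ T = (S \ T) ∪ (T \ S) := rfl
  have hd : Disjoint (S \ T) (T \ S) := disjoint_sdiff_sdiff
  have h2 : (S ∆ T).ncard = (S \ T).ncard + (T \ S).ncard := by
    rw [h1, Set.ncard_union_eq hd (hS.diff) (hT.diff)]
  have h3 : (S \ T).ncard + (S ∩ T).ncard = S.ncard := by
    rw [← Set.ncard_union_eq (Set.disjoint_left.2 fun x hx hx2 => hx.2 hx2.2)
      (hS.diff) (hS.inter_of_left _), Set.diff_union_inter]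
  have h4 : (T \ S).ncard + (S ∩ T).ncard = T.ncard := by
    rw [Set.inter_comm,
      ← Set.ncard_union_eq (Set.disjoint_left.2 fun x hx hx2 => hx.2 hx2.2)
      (hT.diff) (hT.inter_of_left _), Set.diff_union_inter]
  omega

/-- Parity additivity of intersection over symmetric difference. -/
lemma even_inter_symmDiff {S T X : Set α} (hS : S.Finite) (hT : T.Finite) (hX : X.Finite) :
    (Even ((X ∩ (S ∆ T)).ncard) ↔ (Even ((X ∩ S).ncard) ↔ Even ((X ∩ T).ncard))) := by
  have h1 : X ∩ (S ∆ T) = (X ∩ S) ∆ (X ∩ T) := by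
    rw [Set.inter_symmDiff_distrib_left]
  have h2 := ncard_symmDiff_add (X ∩ S) (X ∩ T) (hX.inter_of_left _) (hX.inter_of_left _)
  rw [h1]
  rcases Nat.even_or_odd ((X ∩ S).ncard) with h | h <;>
    rcases Nat.even_or_odd ((X ∩ T).ncard) with h' | h' <;>
    rcases Nat.even_or_odd (((X ∩ S) ∆ (X ∩ T)).ncard) with h'' | h'' <;>
      simp only [Nat.even_iff, Nat.odd_iff] at * <;> omega

lemma even_ncard_union_of_disjoint {S T : Set α} (hS : S.Finite) (hT : T.Finite)
    (hd : Disjoint S T) : (S ∪ T).ncard = S.ncard + T.ncard :=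
  Set.ncard_union_eq hd hS hT



lemma zmod2_cases (x : ZMod 2) : x = 0 ∨ x = 1 := by
  have h : ∀ y : Fin 2, y = 0 ∨ y = 1 := by decide
  exact h x

lemma linearIndependent_zmod2_iff {V : Type} [AddCommGroup V] [Module (ZMod 2) V]
    {S : Set α} (hS : S.Finite) (φ : α → V) :
    LinearIndependent (ZMod 2) (S.restrict φ) ↔
      ∀ T, T ⊆ S → T.Nonempty → ∑ᶠ e ∈ T, φ e ≠ 0 := by
  rw [show S.restrict φ = φ ∘ Subtype.val from rfl, linearIndependent_comp_subtype_iff, linearIndepOn_iff]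
  constructor
  · intro h T hTS hTne h0
    have hT : T.Finite := hS.subset hTS
    classical
    set l : α →₀ ZMod 2 :=
      ⟨hT.toFinset, fun a => if a ∈ T then 1 else 0, by
        intro a
        simp only [Set.Finite.mem_toFinset]
        constructor
        · intro ha; simp [ha]
        · intro ha; by_contra hc; simp [hc] at ha⟩ with hl
    have hsupp : (l.support : Set α) ⊆ S := by
      intro a ha
      simp only [hl, Finsupp.mem_support_iff, Finsupp.coe_mk] at ha
      by_contra hc
      have : a ∉ T := fun h' => hc (hTS h')
      simp [this] at ha
    have htot : Finsupp.linearCombination (ZMod 2) φ l = ∑ᶠ e ∈ T, φ e := by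
      rw [Finsupp.linearCombination_apply, Finsupp.sum]
      have : ∀ a ∈ l.support, l a • φ a = φ a := by
        intro a ha
        have haT : a ∈ T := by
          by_contra hc
          simp only [hl, Finsupp.mem_support_iff, Finsupp.coe_mk] at ha
          simp [hc] at ha
        simp [hl, haT]
      rw [Finset.sum_congr rfl this]
      have hsup : l.support = hT.toFinset := rfl
      rw [hsup, ← finsum_mem_coe_finset, Set.Finite.coe_toFinset]
    have hz := h l (by rwa [Finsupp.mem_supported]) (by rw [htot, h0])
    obtain ⟨t, ht⟩ := hTne
    have h1 : l t = 1 := by simp [hl, ht]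
    rw [hz] at h1
    simp at h1
  · intro h l hl h0
    by_contra hne
    have hsne : l.support.Nonempty := Finsupp.support_nonempty_iff.2 hne
    have hTS : (l.support : Set α) ⊆ S := by rwa [Finsupp.mem_supported] at hl
    refine h (l.support : Set α) hTS ⟨hsne.choose, hsne.choose_spec⟩ ?_
    rw [finsum_mem_coe_finset]
    rw [Finsupp.linearCombination_apply, Finsupp.sum] at h0
    rw [← h0]
    refine Finset.sum_congr rfl fun a ha => ?_
    rcases zmod2_cases (l a) with h1 | h1
    · exact absurd h1 (Finsupp.mem_support_iff.1 ha)
    · rw [h1, one_smul]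

section Machinery
variable {V : Type} [AddCommGroup V] [Module (ZMod 2) V]

/-- the sum of φ over S -/
noncomputable def sig (φ : α → V) (S : Set α) : V := ∑ᶠ e ∈ S, φ e

/-- combinatorial form of GF(2)-representability -/
def GoodRep (M : Matroid α) (φ : α → V) : Prop :=
  ∀ ⦃I : Set α⦄, I ⊆ M.E → (M.Indep I ↔ ∀ T, T ⊆ I → T.Nonempty → sig φ T ≠ 0)

variable {M : Matroid α} {φ : α → V}

lemma sig_empty : sig φ (∅ : Set α) = 0 := finsum_mem_empty

lemma sig_union (hS : (S : Set α).Finite) (hT : T.Finite) (hd : Disjoint S T) :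
    sig φ (S ∪ T) = sig φ S + sig φ T := finsum_mem_union hd hS hT

lemma add_self_char2 (x : V) : x + x = 0 := by
  have h : (2 : ZMod 2) • x = 0 := by
    rw [show (2 : ZMod 2) = 0 by decide, zero_smul]
  rwa [two_smul] at h

lemma sig_symmDiff (hS : (S : Set α).Finite) (hT : T.Finite) :
    sig φ (S ∆ T) = sig φ S + sig φ T := by
  have h1 : S = (S \ T) ∪ (S ∩ T) := (Set.diff_union_inter S T).symm
  have h2 : T = (T \ S) ∪ (S ∩ T) := by
    rw [Set.inter_comm]; exact (Set.diff_union_inter T S).symm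
  have hdS : Disjoint (S \ T) (S ∩ T) := Set.disjoint_left.2 fun x hx hx2 => hx.2 hx2.2
  have hdT : Disjoint (T \ S) (S ∩ T) := Set.disjoint_left.2 fun x hx hx2 => hx.2 hx2.1
  have h3 : sig φ S = sig φ (S \ T) + sig φ (S ∩ T) := by
    conv_lhs => rw [h1]
    exact sig_union (hS.diff) (hS.inter_of_left _) hdS
  have h4 : sig φ T = sig φ (T \ S) + sig φ (S ∩ T) := by
    conv_lhs => rw [h2]
    exact sig_union (hT.diff) (hS.inter_of_left _) hdT
  have h5 : sig φ (S ∆ T) = sig φ (S \ T) + sig φ (T \ S) := by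
    rw [Set.symmDiff_def]
    exact sig_union (hS.diff) (hT.diff) disjoint_sdiff_sdiff
  rw [h5, h3, h4,
    show sig φ (S \ T) + sig φ (S ∩ T) + (sig φ (T \ S) + sig φ (S ∩ T)) =
      sig φ (S \ T) + sig φ (T \ S) + (sig φ (S ∩ T) + sig φ (S ∩ T)) by abel,
    add_self_char2, add_zero]

variable [M.Finite]

lemma indep_sig_ne (hrep : GoodRep M φ) {I : Set α} (hI : M.Indep I) (hne : I.Nonempty) :
    sig φ I ≠ 0 :=
  ((hrep hI.subset_ground).1 hI) I subset_rfl hne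

lemma not_indep_of_sig_eq_zero (hrep : GoodRep M φ) {S : Set α} (hS : S ⊆ M.E)
    (hne : S.Nonempty) (h0 : sig φ S = 0) : ¬ M.Indep S :=
  fun hI => indep_sig_ne hrep hI hne h0

/-- every dependent set contains a circuit (pure matroid theory) -/
lemma exists_circuit_subset (M : Matroid α) [M.Finite] {X : Set α} (hXE : X ⊆ M.E)
    (hX : ¬ M.Indep X) : ∃ C, C ⊆ X ∧ IsCircuit M C := by
  suffices h : ∀ n (X : Set α), X.ncard ≤ n → X ⊆ M.E → ¬M.Indep X →
      ∃ C, C ⊆ X ∧ IsCircuit M C from h X.ncard X le_rfl hXE hX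
  intro n
  induction n with
  | zero =>
    intro X hc hXE hX
    have : X = ∅ := by
      have := M.set_finite X hXE
      rw [← Set.ncard_eq_zero this]; omega
    rw [this] at hX
    exact absurd M.empty_indep hX
  | succ n ih =>
    intro X hc hXE hX
    by_cases hmin : ∀ Y, Y ⊂ X → M.Indep Y
    · exact ⟨X, subset_rfl, hXE, hX, hmin⟩
    · push_neg at hmin
      obtain ⟨Y, hYX, hYdep⟩ := hmin
      have hfin := M.set_finite X hXE
      have : Y.ncard ≤ n := by
        have := Set.ncard_lt_ncard hYX hfin
        omega
      obtain ⟨C, hCY, hC⟩ := ih Y this (hYX.subset.trans hXE) hYdep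
      exact ⟨C, hCY.trans hYX.subset, hC⟩

lemma IsCircuit.nonempty {C : Set α} (hC : IsCircuit M C) : C.Nonempty := by
  rcases Set.eq_empty_or_nonempty C with h | h
  · rw [h] at hC
    exact absurd M.empty_indep hC.2.1
  · exact h

lemma circuit_sig_zero (hrep : GoodRep M φ) {C : Set α} (hC : IsCircuit M C) :
    sig φ C = 0 := by
  obtain ⟨hCE, hCdep, hCmin⟩ := hC
  have := (hrep hCE).not.1 hCdep
  push_neg at this
  obtain ⟨T, hTC, hTne, hT0⟩ := this
  rcases eq_or_ne T C with rfl | hne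
  · exact hT0
  · have hTi : M.Indep T := hCmin T ⟨hTC, fun h => hne (subset_antisymm hTC h)⟩
    exact absurd hT0 (indep_sig_ne hrep hTi hTne)

lemma circuitSpace_subset_ground {X : Set α} (hX : X ∈ CircuitSpace M) : X ⊆ M.E := by
  obtain ⟨𝒞, h1, _, rfl⟩ := hX
  intro x hx
  obtain ⟨C, hC, hxC⟩ := hx
  exact (h1 C hC).1 hxC

lemma sig_sUnion_finset (hrep : GoodRep M φ) (𝒞 : Finset (Set α))
    (h1 : ∀ C ∈ 𝒞, IsCircuit M C) (h2 : (↑𝒞 : Set (Set α)).Pairwise Disjoint) :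
    sig φ (⋃₀ ↑𝒞) = 0 := by
  classical
  induction 𝒞 using Finset.induction_on with
  | empty => simpa using sig_empty (φ := φ)
  | @insert C 𝒞 hC ih =>
    have hCc : IsCircuit M C := h1 C (Finset.mem_insert_self _ _)
    have hrest : ∀ D ∈ 𝒞, IsCircuit M D := fun D hD => h1 D (Finset.mem_insert_of_mem hD)
    have hp : (↑𝒞 : Set (Set α)).Pairwise Disjoint := by
      refine h2.mono ?_
      rw [Finset.coe_insert]; exact Set.subset_insert _ _
    have hd : Disjoint C (⋃₀ ↑𝒞) := by
      rw [Set.disjoint_sUnion_right]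
      intro D hD
      rw [Finset.mem_coe] at hD
      exact h2 (by simp) (by simp [hD]) (fun h => hC (h ▸ hD))
    have hfin : (⋃₀ (↑𝒞 : Set (Set α))).Finite := by
      apply Set.Finite.subset M.ground_finite
      intro x hx
      obtain ⟨D, hD, hxD⟩ := hx
      exact (hrest D (by exact_mod_cast hD)).1 hxD
    have hCfin : C.Finite := M.set_finite C hCc.1
    rw [Finset.coe_insert, Set.sUnion_insert, sig_union hCfin hfin hd,
      circuit_sig_zero hrep hCc, ih hrest hp, add_zero]


lemma circuitSpace_iff (hrep : GoodRep M φ) {X : Set α} :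
    X ∈ CircuitSpace M ↔ X ⊆ M.E ∧ sig φ X = 0 := by
  constructor
  · intro hX
    refine ⟨circuitSpace_subset_ground hX, ?_⟩
    obtain ⟨𝒞, h1, h2, rfl⟩ := hX
    exact sig_sUnion_finset hrep 𝒞 h1 h2
  · rintro ⟨hXE, hX0⟩
    suffices h : ∀ n (X : Set α), X.ncard ≤ n → X ⊆ M.E → sig φ X = 0 →
        X ∈ CircuitSpace M from h X.ncard X le_rfl hXE hX0
    intro n
    induction n with
    | zero =>
      intro X hc hXE hX0
      have hX : X = ∅ := by
        rw [← Set.ncard_eq_zero (M.set_finite X hXE)]; omega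
      exact ⟨∅, by simp, by simp, by simp [hX]⟩
    | succ n ih =>
      intro X hc hXE hX0
      rcases Set.eq_empty_or_nonempty X with rfl | hne
      · exact ⟨∅, by simp, by simp, by simp⟩
      have hdep : ¬ M.Indep X := not_indep_of_sig_eq_zero hrep hXE hne hX0
      obtain ⟨C, hCX, hC⟩ := exists_circuit_subset M hXE hdep
      have hCfin : C.Finite := M.set_finite C hC.1
      have hXfin : X.Finite := M.set_finite X hXE
      have hCne : C.Nonempty := hC.nonempty
      have hdisj : Disjoint C (X \ C) := Set.disjoint_left.2 fun x hx hx2 => hx2.2 hx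
      have hX' : X = C ∪ (X \ C) := by rw [Set.union_diff_cancel' subset_rfl hCX]
      have hsig' : sig φ (X \ C) = 0 := by
        have := sig_union (φ := φ) hCfin (hXfin.diff) hdisj
        rw [← hX', hX0, circuit_sig_zero hrep hC, zero_add] at this
        exact this.symm
      have hlt : (X \ C).ncard ≤ n := by
        have h1 : (X \ C).ncard < X.ncard := by
          apply Set.ncard_lt_ncard _ hXfin
          rw [Set.ssubset_iff_of_subset Set.diff_subset]
          obtain ⟨c, hc'⟩ := hCne
          exact ⟨c, hCX hc', fun h => h.2 hc'⟩
        omega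
      obtain ⟨𝒞, h1, h2, h3⟩ := ih (X \ C) hlt (Set.diff_subset.trans hXE) hsig'
      classical
      refine ⟨insert C 𝒞, ?_, ?_, ?_⟩
      · intro D hD
        rcases Finset.mem_insert.1 hD with rfl | hD
        · exact hC
        · exact h1 D hD
      · rw [Finset.coe_insert]
        refine Set.Pairwise.insert h2 ?_
        intro D hD hne'
        have hDsub : D ⊆ X \ C := by
          rw [h3]
          exact Set.subset_sUnion_of_mem hD
        constructor
        · exact (Set.disjoint_of_subset_right hDsub hdisj)
        · exact (Set.disjoint_of_subset_right hDsub hdisj).symm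
      · rw [Finset.coe_insert, Set.sUnion_insert, ← h3, ← hX']


/-- membership test for cocircuit space -/
def Perp (M : Matroid α) (φ : α → V) (S : Set α) : Prop :=
  S ⊆ M.E ∧ ∀ T, T ⊆ M.E → sig φ T = 0 → Even ((S ∩ T).ncard)

lemma exists_fundC {B : Set α} {e : α} (hB : M.IsBase B) (he : e ∈ M.E \ B) :
    ∃ C, IsCircuit M C ∧ e ∈ C ∧ C ⊆ insert e B := by
  have hdep : ¬ M.Indep (insert e B) := (hB.insert_dep he).1
  have hsub : insert e B ⊆ M.E := Set.insert_subset he.1 hB.subset_ground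
  obtain ⟨C, hCsub, hC⟩ := exists_circuit_subset M hsub hdep
  refine ⟨C, hC, ?_, hCsub⟩
  by_contra heC
  have : C ⊆ B := fun x hx => by
    rcases hCsub hx with rfl | h
    · exact absurd hx heC
    · exact h
  exact hC.2.1 (hB.indep.subset this)

lemma fundC_unique (hrep : GoodRep M φ) {B : Set α} {e : α} (hB : M.IsBase B)
    {C₁ C₂ : Set α} (h₁ : IsCircuit M C₁) (h₂ : IsCircuit M C₂)
    (hs₁ : C₁ ⊆ insert e B) (hs₂ : C₂ ⊆ insert e B) : C₁ = C₂ := by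
  have he₁ : e ∈ C₁ := by
    by_contra h
    exact h₁.2.1 (hB.indep.subset fun x hx => (hs₁ hx).resolve_left (fun h' => h (h' ▸ hx)))
  have he₂ : e ∈ C₂ := by
    by_contra h
    exact h₂.2.1 (hB.indep.subset fun x hx => (hs₂ hx).resolve_left (fun h' => h (h' ▸ hx)))
  have hfin₁ : C₁.Finite := M.set_finite _ h₁.1
  have hfin₂ : C₂.Finite := M.set_finite _ h₂.1
  have hsd : sig φ (C₁ ∆ C₂) = 0 := by
    rw [sig_symmDiff hfin₁ hfin₂, circuit_sig_zero hrep h₁, circuit_sig_zero hrep h₂, add_zero]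
  have hsub : C₁ ∆ C₂ ⊆ B := by
    rintro x (⟨hx1, hx2⟩ | ⟨hx1, hx2⟩)
    · rcases hs₁ hx1 with rfl | h
      · exact absurd he₂ hx2
      · exact h
    · rcases hs₂ hx1 with rfl | h
      · exact absurd he₁ hx2
      · exact h
  have hind : M.Indep (C₁ ∆ C₂) := hB.indep.subset hsub
  rcases Set.eq_empty_or_nonempty (C₁ ∆ C₂) with h | h
  · exact symmDiff_eq_bot.1 h
  · exact absurd hsd (indep_sig_ne hrep hind h)

/-- fundamental cocircuit support set -/
def SStar (M : Matroid α) (f : α → Set α) (B : Set α) (b : α) : Set α :=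
  insert b {e | e ∈ M.E \ B ∧ b ∈ f e}

lemma SStar_subset_ground {f : α → Set α} {B : Set α} {b : α} (hb : b ∈ B)
    (hB : B ⊆ M.E) : SStar M f B b ⊆ M.E := by
  rintro x (rfl | ⟨hx, _⟩)
  · exact hB hb
  · exact hx.1

lemma SStar_inter_base {f : α → Set α} {B : Set α} {b : α} (hb : b ∈ B) :
    SStar M f B b ∩ B = {b} := by
  ext x
  constructor
  · rintro ⟨rfl | ⟨hx, _⟩, hxB⟩
    · rfl
    · exact absurd hxB hx.2
  · rintro rfl
    exact ⟨Set.mem_insert _ _, hb⟩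

section SStarLemmas
variable {B : Set α} {f : α → Set α} {b : α}

lemma fund_inter_SStar_even (hB : M.IsBase B)
    (hf : ∀ e ∈ M.E \ B, IsCircuit M (f e) ∧ e ∈ f e ∧ f e ⊆ insert e B)
    (hb : b ∈ B) {e : α} (he : e ∈ M.E \ B) :
    Even ((f e ∩ SStar M f B b).ncard) := by
  obtain ⟨hC, heC, hCsub⟩ := hf e he
  by_cases hbC : b ∈ f e
  · have hset : f e ∩ SStar M f B b = {e, b} := by
      ext x
      constructor
      · rintro ⟨hx1, rfl | ⟨hx2, _⟩⟩
        · exact Or.inr rfl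
        · rcases hCsub hx1 with rfl | h
          · exact Or.inl rfl
          · exact absurd h hx2.2
      · rintro (rfl | rfl)
        · exact ⟨heC, Set.mem_insert_iff.2 (Or.inr ⟨he, hbC⟩)⟩
        · exact ⟨hbC, Set.mem_insert _ _⟩
    rw [hset, Set.ncard_pair (fun (h : e = b) => he.2 (by rw [h]; exact hb))]
    exact even_two
  · have hset : f e ∩ SStar M f B b = ∅ := by
      ext x
      simp only [Set.mem_inter_iff, Set.mem_empty_iff_false, iff_false, not_and]
      rintro hx1 (rfl | ⟨hx2, hbx⟩)
      · exact hbC hx1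
      · rcases hCsub hx1 with rfl | h
        · exact hbC hbx
        · exact hx2.2 h
    rw [hset]
    simp

lemma sig_zero_inter_SStar_even (hrep : GoodRep M φ) (hB : M.IsBase B)
    (hf : ∀ e ∈ M.E \ B, IsCircuit M (f e) ∧ e ∈ f e ∧ f e ⊆ insert e B)
    (hb : b ∈ B) :
    ∀ T, T ⊆ M.E → sig φ T = 0 → Even ((SStar M f B b ∩ T).ncard) := by
  suffices h : ∀ n T, (T \ B).ncard ≤ n → T ⊆ M.E → sig φ T = 0 →
      Even ((SStar M f B b ∩ T).ncard) from fun T h1 h2 => h (T \ B).ncard T le_rfl h1 h2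
  intro n
  induction n with
  | zero =>
    intro T hc hTE hT0
    have hTB : T ⊆ B := by
      have h0 : (T \ B) = ∅ := by
        rw [← Set.ncard_eq_zero ((M.set_finite T hTE).diff)]; omega
      intro x hx
      by_contra hxB
      exact absurd (show x ∈ T \ B from ⟨hx, hxB⟩) (by rw [h0]; exact id)
    rcases Set.eq_empty_or_nonempty T with rfl | hne
    · simp
    · exact absurd hT0 (indep_sig_ne hrep (hB.indep.subset hTB) hne)
  | succ n ih =>
    intro T hc hTE hT0
    rcases Set.eq_empty_or_nonempty (T \ B) with hTB | ⟨e, heTB⟩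
    · have hTB' : T ⊆ B := fun x hx => by
        by_contra hxB
        exact absurd (show x ∈ T \ B from ⟨hx, hxB⟩) (by rw [hTB]; exact id)
      rcases Set.eq_empty_or_nonempty T with rfl | hne
      · simp
      · exact absurd hT0 (indep_sig_ne hrep (hB.indep.subset hTB') hne)
    · have heEB : e ∈ M.E \ B := ⟨hTE heTB.1, heTB.2⟩
      obtain ⟨hC, heC, hCsub⟩ := hf e heEB
      have hCfin : (f e).Finite := M.set_finite _ hC.1
      have hTfin : T.Finite := M.set_finite T hTE
      set T' := T ∆ f e with hT'
      have hT'E : T' ⊆ M.E := by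
        intro x hx
        rcases hx with ⟨hx, _⟩ | ⟨hx, _⟩
        · exact hTE hx
        · exact hC.1 hx
      have hsT' : sig φ T' = 0 := by
        rw [hT', sig_symmDiff hTfin hCfin, hT0, circuit_sig_zero hrep hC, add_zero]
      have hcard : (T' \ B).ncard ≤ n := by
        have hsub : T' \ B ⊆ (T \ B) \ {e} := by
          rintro x ⟨hx, hxB⟩
          rcases hx with ⟨hx1, hx2⟩ | ⟨hx1, hx2⟩
          · refine ⟨⟨hx1, hxB⟩, fun h => hx2 (by rw [Set.mem_singleton_iff] at h; rw [h]; exact heC)⟩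
          · rcases hCsub hx1 with rfl | h
            · exact absurd heTB.1 hx2
            · exact absurd h hxB
        have h1 : ((T \ B) \ {e}).ncard < (T \ B).ncard := by
          apply Set.ncard_lt_ncard _ (hTfin.diff)
          rw [Set.ssubset_iff_of_subset Set.diff_subset]
          exact ⟨e, heTB, fun h => h.2 rfl⟩
        have h2 : (T' \ B).ncard ≤ ((T \ B) \ {e}).ncard :=
          Set.ncard_le_ncard hsub ((hTfin.diff).diff)
        omega
      have hih := ih T' hcard hT'E hsT'
      have hCeven : Even ((SStar M f B b ∩ f e).ncard) := by
        rw [Set.inter_comm]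
        exact fund_inter_SStar_even hB hf hb heEB
      have hTT' : T = T' ∆ f e := by
        rw [hT', symmDiff_assoc, symmDiff_self, symmDiff_bot]
      rw [hTT']
      rw [even_inter_symmDiff (M.set_finite T' hT'E) hCfin
        (M.set_finite _ (SStar_subset_ground hb hB.subset_ground))]
      exact iff_of_true hih hCeven

lemma sig_zero_of_perp_SStar (hrep : GoodRep M φ) (hB : M.IsBase B)
    (hf : ∀ e ∈ M.E \ B, IsCircuit M (f e) ∧ e ∈ f e ∧ f e ⊆ insert e B)
    {X : Set α} (hXE : X ⊆ M.E)
    (h : ∀ b ∈ B, Even ((X ∩ SStar M f B b).ncard)) : sig φ X = 0 := by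
  suffices hsuf : ∀ n (X : Set α), (X \ B).ncard ≤ n → X ⊆ M.E →
      (∀ b ∈ B, Even ((X ∩ SStar M f B b).ncard)) → sig φ X = 0 from
    hsuf (X \ B).ncard X le_rfl hXE h
  clear hXE h X
  have hbase : ∀ (X : Set α), X ⊆ B → X ⊆ M.E →
      (∀ b ∈ B, Even ((X ∩ SStar M f B b).ncard)) → sig φ X = 0 := by
    intro X hXB' hXE h
    rcases Set.eq_empty_or_nonempty X with rfl | ⟨b, hb⟩
    · exact sig_empty
    · exfalso
      have hbB : b ∈ B := hXB' hb
      have hset : X ∩ SStar M f B b = {b} := by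
        ext x
        constructor
        · rintro ⟨hx1, hx2⟩
          have : x ∈ SStar M f B b ∩ B := ⟨hx2, hXB' hx1⟩
          rwa [SStar_inter_base hbB] at this
        · rintro rfl
          exact ⟨hb, Set.mem_insert _ _⟩
      have := h b hbB
      rw [hset, Set.ncard_singleton] at this
      simp at this
  intro n
  induction n with
  | zero =>
    intro X hn hXE h
    refine hbase X ?_ hXE h
    intro x hx
    by_contra hxB
    have hne : (X \ B).Nonempty := ⟨x, hx, hxB⟩
    rw [← Set.ncard_pos ((M.set_finite X hXE).diff)] at hne
    omega
  | succ n ih =>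
    intro X hn hXE h
    rcases Set.eq_empty_or_nonempty (X \ B) with hXB | ⟨e, heXB⟩
    · refine hbase X ?_ hXE h
      intro x hx
      by_contra hxB
      exact absurd (show x ∈ X \ B from ⟨hx, hxB⟩) (by rw [hXB]; exact id)
    · have heEB : e ∈ M.E \ B := ⟨hXE heXB.1, heXB.2⟩
      obtain ⟨hC, heC, hCsub⟩ := hf e heEB
      have hCfin : (f e).Finite := M.set_finite _ hC.1
      have hXfin : X.Finite := M.set_finite X hXE
      set X' := X ∆ f e with hX'
      have hX'E : X' ⊆ M.E := by
        intro x hx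
        rcases hx with ⟨hx, _⟩ | ⟨hx, _⟩
        · exact hXE hx
        · exact hC.1 hx
      have hperp' : ∀ b ∈ B, Even ((X' ∩ SStar M f B b).ncard) := by
        intro b hb
        have h1 := h b hb
        have h2 : Even (((f e) ∩ SStar M f B b).ncard) := fund_inter_SStar_even hB hf hb heEB
        rw [Set.inter_comm] at h1 h2 ⊢
        rw [hX', even_inter_symmDiff hXfin hCfin
          (M.set_finite _ (SStar_subset_ground hb hB.subset_ground))]
        exact iff_of_true h1 h2
      have hcard : (X' \ B).ncard ≤ n := by
        have hsub : X' \ B ⊆ (X \ B) \ {e} := by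
          rintro x ⟨hx, hxB⟩
          rcases hx with ⟨hx1, hx2⟩ | ⟨hx1, hx2⟩
          · exact ⟨⟨hx1, hxB⟩,
              fun h' => hx2 (by rw [Set.mem_singleton_iff] at h'; rw [h']; exact heC)⟩
          · rcases hCsub hx1 with rfl | h'
            · exact absurd heXB.1 hx2
            · exact absurd h' hxB
        have h1 : ((X \ B) \ {e}).ncard < (X \ B).ncard := by
          apply Set.ncard_lt_ncard _ (hXfin.diff)
          rw [Set.ssubset_iff_of_subset Set.diff_subset]
          exact ⟨e, heXB, fun h' => h'.2 rfl⟩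
        have h2 : (X' \ B).ncard ≤ ((X \ B) \ {e}).ncard :=
          Set.ncard_le_ncard hsub ((hXfin.diff).diff)
        omega
      have hX'0 : sig φ X' = 0 := ih X' hcard hX'E hperp'
      have hXX' : sig φ X = sig φ X' + sig φ (f e) := by
        rw [show X = X' ∆ f e by rw [hX', symmDiff_assoc, symmDiff_self, symmDiff_bot],
          sig_symmDiff (M.set_finite _ hX'E) hCfin]
      rw [hXX', hX'0, circuit_sig_zero hrep hC, add_zero]

end SStarLemmas


lemma even_inter_sUnion {X : Set α} (𝒞 : Finset (Set α))
    (hfin : ∀ C ∈ 𝒞, (C : Set α).Finite) (hXfin : X.Finite)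
    (hp : (↑𝒞 : Set (Set α)).Pairwise Disjoint)
    (h : ∀ C ∈ 𝒞, Even ((X ∩ C).ncard)) : Even ((X ∩ ⋃₀ ↑𝒞).ncard) := by
  classical
  induction 𝒞 using Finset.induction_on with
  | empty => simp
  | @insert C 𝒞 hC ih =>
    have hUfin : (⋃₀ (↑𝒞 : Set (Set α))).Finite := by
      apply Set.Finite.sUnion (Finset.finite_toSet 𝒞)
      intro D hD
      exact hfin D (Finset.mem_insert_of_mem (by exact_mod_cast hD))
    have hd : Disjoint C (⋃₀ ↑𝒞) := by
      rw [Set.disjoint_sUnion_right]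
      intro D hD
      rw [Finset.mem_coe] at hD
      exact hp (by simp) (by simp [hD]) (fun h' => hC (h' ▸ hD))
    have hp' : (↑𝒞 : Set (Set α)).Pairwise Disjoint := by
      refine hp.mono ?_
      rw [Finset.coe_insert]; exact Set.subset_insert _ _
    have hih := ih (fun D hD => hfin D (Finset.mem_insert_of_mem hD)) hp'
      (fun D hD => h D (Finset.mem_insert_of_mem hD))
    rw [Finset.coe_insert, Set.sUnion_insert, Set.inter_union_distrib_left,
      Set.ncard_union_eq (Set.disjoint_of_subset Set.inter_subset_right Set.inter_subset_right hd)
        (hXfin.inter_of_left _) (hXfin.inter_of_left _)]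
    exact (h C (Finset.mem_insert_self _ _)).add hih

lemma codep_of_perp (hrep : GoodRep M φ) {S : Set α} (hS : Perp M φ S) (hne : S.Nonempty) :
    ¬ M✶.Indep S := by
  intro hI
  rw [Matroid.dual_indep_iff_exists hS.1] at hI
  obtain ⟨B, hB, hdisj⟩ := hI
  obtain ⟨e, he⟩ := hne
  have heEB : e ∈ M.E \ B := ⟨hS.1 he, fun h => (Set.disjoint_left.1 hdisj he) h⟩
  obtain ⟨C, hC, heC, hCsub⟩ := exists_fundC hB heEB
  have hpar := hS.2 C hC.1 (circuit_sig_zero hrep hC)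
  have hSC : S ∩ C = {e} := by
    ext x
    constructor
    · rintro ⟨hx1, hx2⟩
      rcases hCsub hx2 with rfl | h
      · rfl
      · exact absurd h (Set.disjoint_left.1 hdisj hx1)
    · rintro rfl
      exact ⟨he, heC⟩
  rw [hSC, Set.ncard_singleton] at hpar
  simp at hpar

lemma exists_perp_of_codep (hrep : GoodRep M φ) {X : Set α} (hXE : X ⊆ M.E)
    (hdep : ¬ M✶.Indep X) : ∃ S, S ⊆ X ∧ S.Nonempty ∧ Perp M φ S := by
  classical
  obtain ⟨J, hJ⟩ := M.exists_isBasis (M.E \ X) Set.diff_subset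
  obtain ⟨B, hB, hJB⟩ := hJ.indep.exists_isBase_superset
  have hBX : ∃ b, b ∈ X ∧ b ∈ B := by
    by_contra hcon
    push_neg at hcon
    exact hdep ((Matroid.dual_indep_iff_exists hXE).2 ⟨B, hB, Set.disjoint_left.2 hcon⟩)
  obtain ⟨b, hbX, hbB⟩ := hBX
  set f : α → Set α := fun e =>
    if h : e ∈ M.E \ B then (exists_fundC hB h).choose else ∅ with hfdef
  have hf : ∀ e ∈ M.E \ B, IsCircuit M (f e) ∧ e ∈ f e ∧ f e ⊆ insert e B := by
    intro e he
    rw [hfdef]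
    simp only [dif_pos he]
    obtain ⟨h1, h2, h3⟩ := (exists_fundC hB he).choose_spec
    exact ⟨h1, h2, h3⟩
  refine ⟨SStar M f B b, ?_, ⟨b, Set.mem_insert _ _⟩,
    SStar_subset_ground hbB hB.subset_ground,
    sig_zero_inter_SStar_even hrep hB hf hbB⟩
  rintro x (rfl | ⟨hxEB, hbfx⟩)
  · exact hbX
  · by_contra hxX
    have hxEX : x ∈ (M.E \ X) \ J := ⟨⟨hxEB.1, hxX⟩, fun h => hxEB.2 (hJB h)⟩
    have hdep' : ¬ M.Indep (insert x J) := (hJ.insert_dep hxEX).1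
    have hsub' : insert x J ⊆ M.E :=
      Set.insert_subset hxEB.1 (hJ.indep.subset_ground)
    obtain ⟨C', hC'sub, hC'⟩ := exists_circuit_subset M hsub' hdep'
    have hxC' : x ∈ C' := by
      by_contra hxC
      refine hC'.2.1 (hJ.indep.subset fun y hy => ?_)
      rcases hC'sub hy with rfl | h
      · exact absurd hy hxC
      · exact h
    have hC'B : C' ⊆ insert x B := hC'sub.trans (Set.insert_subset_insert hJB)
    have heq : f x = C' := fundC_unique hrep hB (hf x hxEB).1 hC' (hf x hxEB).2.2 hC'B
    rw [heq] at hbfx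
    rcases hC'sub hbfx with rfl | h
    · exact hxEB.2 hbB
    · exact (hJ.subset h).2 hbX

lemma cocircuit_perp (hrep : GoodRep M φ) {C : Set α} (hC : IsCircuit M✶ C) :
    Perp M φ C := by
  have hCE : C ⊆ M.E := by
    have := hC.1
    rwa [Matroid.dual_ground] at this
  obtain ⟨S, hSC, hSne, hSperp⟩ := exists_perp_of_codep hrep hCE hC.2.1
  rcases eq_or_ne S C with rfl | hne
  · exact hSperp
  · exact absurd (hC.2.2 S ⟨hSC, fun h => hne (subset_antisymm hSC h)⟩)
      (codep_of_perp hrep hSperp hSne)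

lemma dual_circuitSpace_iff (hrep : GoodRep M φ) {X : Set α} :
    X ∈ CircuitSpace M✶ ↔ Perp M φ X := by
  constructor
  · rintro ⟨𝒞, h1, h2, rfl⟩
    have hsub : ⋃₀ (↑𝒞 : Set (Set α)) ⊆ M.E := by
      intro x hx
      obtain ⟨C, hC, hxC⟩ := hx
      have := (h1 C hC).1
      rw [Matroid.dual_ground] at this
      exact this hxC
    refine ⟨hsub, fun T hTE hT0 => ?_⟩
    rw [Set.inter_comm]
    refine even_inter_sUnion 𝒞 ?_ (M.set_finite T hTE) h2 ?_
    · intro C hC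
      refine M.set_finite C ?_
      have := (h1 C hC).1; rwa [Matroid.dual_ground] at this
    · intro C hC
      rw [Set.inter_comm]
      exact (cocircuit_perp hrep (h1 C hC)).2 T hTE hT0
  · intro hX
    obtain ⟨hXE, hXp⟩ := hX
    suffices h : ∀ n (X : Set α), X.ncard ≤ n → X ⊆ M.E →
        (∀ T, T ⊆ M.E → sig φ T = 0 → Even ((X ∩ T).ncard)) → X ∈ CircuitSpace M✶ from
      h X.ncard X le_rfl hXE hXp
    clear hXE hXp X
    intro n
    induction n with
    | zero =>
      intro X hc hXE hXp
      have hX : X = ∅ := by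
        rw [← Set.ncard_eq_zero (M.set_finite X hXE)]; omega
      exact ⟨∅, by simp, by simp, by simp [hX]⟩
    | succ n ih =>
      intro X hc hXE hXp
      rcases Set.eq_empty_or_nonempty X with rfl | hne
      · exact ⟨∅, by simp, by simp, by simp⟩
      have hdep : ¬ M✶.Indep X := codep_of_perp hrep ⟨hXE, hXp⟩ hne
      have hXE' : X ⊆ M✶.E := by rwa [Matroid.dual_ground]
      obtain ⟨C, hCX, hC⟩ := exists_circuit_subset M✶ hXE' hdep
      have hCfin : C.Finite := M.set_finite C (by
        have := hC.1; rwa [Matroid.dual_ground] at this)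
      have hXfin : X.Finite := M.set_finite X hXE
      have hCne : C.Nonempty := hC.nonempty
      have hCperp : Perp M φ C := cocircuit_perp hrep hC
      have hX'perp : ∀ T, T ⊆ M.E → sig φ T = 0 → Even (((X \ C) ∩ T).ncard) := by
        intro T hTE hT0
        have h1 := hXp T hTE hT0
        have h2 := hCperp.2 T hTE hT0
        have hXT : X ∩ T = ((X \ C) ∩ T) ∪ (C ∩ T) := by
          rw [← Set.union_inter_distrib_right, Set.diff_union_of_subset hCX]
        have hd : Disjoint ((X \ C) ∩ T) (C ∩ T) :=
          Set.disjoint_of_subset Set.inter_subset_left Set.inter_subset_left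
            (Set.disjoint_left.2 fun x hx hx2 => hx.2 hx2)
        rw [hXT, Set.ncard_union_eq hd ((hXfin.diff).inter_of_left _)
          (hCfin.inter_of_left _)] at h1
        rw [Nat.even_add] at h1
        exact h1.2 h2
      have hlt : (X \ C).ncard ≤ n := by
        have h1 : (X \ C).ncard < X.ncard := by
          apply Set.ncard_lt_ncard _ hXfin
          rw [Set.ssubset_iff_of_subset Set.diff_subset]
          obtain ⟨c, hc'⟩ := hCne
          exact ⟨c, hCX hc', fun h => h.2 hc'⟩
        omega
      obtain ⟨𝒞, h1, h2, h3⟩ := ih (X \ C) hlt (Set.diff_subset.trans hXE) hX'perp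
      classical
      refine ⟨insert C 𝒞, ?_, ?_, ?_⟩
      · intro D hD
        rcases Finset.mem_insert.1 hD with rfl | hD
        · exact hC
        · exact h1 D hD
      · rw [Finset.coe_insert]
        refine Set.Pairwise.insert h2 ?_
        intro D hD hne'
        have hDsub : D ⊆ X \ C := by
          rw [h3]
          exact Set.subset_sUnion_of_mem hD
        have : Disjoint C D :=
          Set.disjoint_of_subset_right hDsub
            (Set.disjoint_left.2 fun x hx hx2 => hx2.2 hx)
        exact ⟨this, this.symm⟩
      · rw [Finset.coe_insert, Set.sUnion_insert, ← h3,
          Set.union_diff_cancel' subset_rfl hCX]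


/-- evaluation maps giving the dual representation -/
noncomputable def dualPsi (M : Matroid α) (φ : α → V) :
    α → ({T : Set α // T ⊆ M.E ∧ sig φ T = 0} → ZMod 2) := fun e T =>
  (T.1.indicator fun _ => (1 : ZMod 2)) e

lemma sig_dualPsi_eq_zero_iff {S : Set α} (hS : S.Finite) :
    sig (dualPsi M φ) S = 0 ↔
      ∀ T, T ⊆ M.E → sig φ T = 0 → Even ((S ∩ T).ncard) := by
  classical
  have heval : ∀ T : {T : Set α // T ⊆ M.E ∧ sig φ T = 0},
      sig (dualPsi M φ) S T = ((S ∩ T.1).ncard : ZMod 2) := by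
    intro T
    have h1 : sig (dualPsi M φ) S = ∑ e ∈ hS.toFinset, dualPsi M φ e := by
      rw [sig, ← finsum_mem_coe_finset, Set.Finite.coe_toFinset]
    rw [h1, Finset.sum_apply]
    have h2 : (∑ e ∈ hS.toFinset, dualPsi M φ e T) =
        ∑ e ∈ hS.toFinset, (if e ∈ T.1 then (1 : ZMod 2) else 0) :=
      Finset.sum_congr rfl fun e _ => Set.indicator_apply _ _ _
    rw [h2, Finset.sum_boole]
    congr 1
    rw [Set.ncard_eq_toFinset_card (S ∩ T.1) (hS.inter_of_left _)]
    congr 1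
    ext x
    simp [Set.Finite.mem_toFinset]
  constructor
  · intro h0 T hTE hT0
    have h1 := heval ⟨T, hTE, hT0⟩
    rw [h0] at h1
    have h2 : (((S ∩ T).ncard : ZMod 2)) = 0 := by
      rw [← h1]; rfl
    rw [ZMod.natCast_eq_zero_iff] at h2
    exact Nat.even_iff.2 (by omega)
  · intro h
    funext T
    rw [heval T, Pi.zero_apply, ZMod.natCast_eq_zero_iff]
    have h1 := Nat.even_iff.1 (h T.1 T.2.1 T.2.2)
    omega

lemma dual_goodRep (hrep : GoodRep M φ) : GoodRep M✶ (dualPsi M φ) := by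
  intro I hIE
  rw [Matroid.dual_ground] at hIE
  constructor
  · intro hI T' hT'I hT'ne h0
    have hT'E : T' ⊆ M.E := hT'I.trans hIE
    have hperp : Perp M φ T' :=
      ⟨hT'E, (sig_dualPsi_eq_zero_iff (M.set_finite _ hT'E)).1 h0⟩
    exact codep_of_perp hrep hperp hT'ne (hI.subset hT'I)
  · intro h
    by_contra hdep
    obtain ⟨S, hSI, hSne, hSperp⟩ := exists_perp_of_codep hrep hIE hdep
    exact h S hSI hSne ((sig_dualPsi_eq_zero_iff (M.set_finite _ hSperp.1)).2 hSperp.2)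

/-- if every cocircuit is even, the ground set is in the circuit space -/
lemma sig_ground_eq_zero_of_cocircuits_even (hrep : GoodRep M φ)
    (h : ∀ C, IsCircuit M✶ C → Even C.ncard) : sig φ M.E = 0 := by
  classical
  obtain ⟨B, hB⟩ := M.exists_isBase
  set f : α → Set α := fun e =>
    if hc : e ∈ M.E \ B then (exists_fundC hB hc).choose else ∅ with hfdef
  have hf : ∀ e ∈ M.E \ B, IsCircuit M (f e) ∧ e ∈ f e ∧ f e ⊆ insert e B := by
    intro e he
    rw [hfdef]
    simp only [dif_pos he]
    obtain ⟨h1, h2, h3⟩ := (exists_fundC hB he).choose_spec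
    exact ⟨h1, h2, h3⟩
  refine sig_zero_of_perp_SStar hrep hB hf subset_rfl ?_
  intro b hb
  have hperp : Perp M φ (SStar M f B b) :=
    ⟨SStar_subset_ground hb hB.subset_ground,
      sig_zero_inter_SStar_even hrep hB hf hb⟩
  have hmem : SStar M f B b ∈ CircuitSpace M✶ := (dual_circuitSpace_iff hrep).2 hperp
  obtain ⟨𝒞, h1, h2, h3⟩ := hmem
  have hinter : M.E ∩ SStar M f B b = SStar M f B b :=
    Set.inter_eq_self_of_subset_right hperp.1
  rw [hinter, h3]
  have : Even ((⋃₀ (↑𝒞 : Set (Set α))).ncard) := by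
    have := even_inter_sUnion (X := ⋃₀ (↑𝒞 : Set (Set α))) 𝒞
      (fun C hC => M.set_finite C (by
        have := (h1 C hC).1; rwa [Matroid.dual_ground] at this)) (by
        rw [← h3]; exact M.set_finite _ hperp.1) h2
      (fun C hC => by
        rw [Set.inter_eq_self_of_subset_right (Set.subset_sUnion_of_mem (Finset.mem_coe.2 hC))]
        exact h C (h1 C hC))
    rwa [Set.inter_self] at this
  exact this

end Machinery

section Comb
variable {M N : Matroid α} {A : Set α} [M.Finite]

lemma basis_ncard_eq {I J X : Set α} (hI : M.IsBasis I X) (hJ : M.IsBasis J X) :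
    I.ncard = J.ncard :=
  Matroid.IsBase.ncard_eq_ncard_of_isBase hI.restrict_isBase hJ.restrict_isBase

lemma indep_ncard_le_basis {I J X : Set α} (hI : M.Indep I) (hIX : I ⊆ X)
    (hJ : M.IsBasis J X) : I.ncard ≤ J.ncard := by
  obtain ⟨J', hJ', hIJ'⟩ := hI.subset_isBasis_of_subset hIX hJ.subset_ground
  rw [← basis_ncard_eq hJ' hJ]
  exact Set.ncard_le_ncard hIJ' (M.set_finite J' hJ'.indep.subset_ground)

lemma base_inter_basis_of_basis_subset {I B : Set α} (hI : M.IsBasis I A) (hB : M.IsBase B)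
    (hIB : I ⊆ B) : A ∩ B = I :=
  (hI.eq_of_subset_indep (hB.indep.inter_left A)
    (Set.subset_inter hI.subset hIB) Set.inter_subset_left).symm

lemma exists_max_base (hA : A ⊆ M.E) : ∃ B, M.IsBase B ∧ M.IsBasis (A ∩ B) A := by
  obtain ⟨I, hI⟩ := M.exists_isBasis A hA
  obtain ⟨B, hB, hIB⟩ := hI.indep.exists_isBase_superset
  refine ⟨B, hB, ?_⟩
  rw [base_inter_basis_of_basis_subset hI hB hIB]
  exact hI

lemma card_twist {B : Set α} (hA : A ⊆ M.E) (hB : M.IsBase B) :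
    (A ∆ B).ncard + 2 * (A ∩ B).ncard = A.ncard + B.ncard :=
  ncard_symmDiff_add A B (M.set_finite A hA) (M.set_finite B hB.subset_ground)

lemma minTwistMem_iff (hA : A ⊆ M.E) {F : Set α} :
    MinTwistMem M A F ↔ ∃ B, M.IsBase B ∧ M.IsBasis (A ∩ B) A ∧ F = A ∆ B := by
  constructor
  · rintro ⟨⟨B, hB, rfl⟩, hmin⟩
    refine ⟨B, hB, ?_, rfl⟩
    have hmax : ∀ B', M.IsBase B' → (A ∩ B').ncard ≤ (A ∩ B).ncard := by
      intro B' hB'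
      have h1 := hmin (A ∆ B') ⟨B', hB', rfl⟩
      have h2 := card_twist hA hB
      have h3 := card_twist hA hB'
      have h4 := hB.ncard_eq_ncard_of_isBase hB'
      omega
    obtain ⟨I, hI, hABI⟩ := (hB.indep.inter_left A).subset_isBasis_of_subset
      Set.inter_subset_left hA
    obtain ⟨B'', hB'', hIB''⟩ := hI.indep.exists_isBase_superset
    have h5 : A ∩ B'' = I := base_inter_basis_of_basis_subset hI hB'' hIB''
    have h6 : (A ∩ B'').ncard ≤ (A ∩ B).ncard := hmax B'' hB''
    rw [h5] at h6
    have h7 : A ∩ B = I :=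
      Set.eq_of_subset_of_ncard_le hABI h6 (M.set_finite I hI.indep.subset_ground)
    rw [h7]
    exact hI
  · rintro ⟨B, hB, hbasis, rfl⟩
    refine ⟨⟨B, hB, rfl⟩, ?_⟩
    rintro F' ⟨B', hB', rfl⟩
    have h1 : (A ∩ B').ncard ≤ (A ∩ B).ncard :=
      indep_ncard_le_basis (hB'.indep.inter_left A) Set.inter_subset_left hbasis
    have h2 := card_twist hA hB
    have h3 := card_twist hA hB'
    have h4 := hB.ncard_eq_ncard_of_isBase hB'
    omega

lemma contr_indep_exchange {I₁ I₂ X : Set α} (hI₁ : M.IsBasis I₁ A) (hI₂ : M.IsBasis I₂ A)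
    (hXE : X ⊆ M.E) (hXA : Disjoint X A) (hind : M.Indep (I₁ ∪ X)) :
    M.Indep (I₂ ∪ X) := by
  have hAE : A ⊆ M.E := hI₁.subset_ground
  have hAX : A ∪ X ⊆ M.E := Set.union_subset hAE hXE
  obtain ⟨J, hJ, hI₂J⟩ := hI₂.indep.subset_isBasis_of_subset
    (hI₂.subset.trans Set.subset_union_left) hAX
  have hJA : J ∩ A = I₂ :=
    (hI₂.eq_of_subset_indep (hJ.indep.inter_right A)
      (Set.subset_inter hI₂J hI₂.subset) Set.inter_subset_right).symm
  have hJdiff : J \ A ⊆ X := fun x hx => (hJ.subset hx.1).resolve_left hx.2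
  obtain ⟨J₁, hJ₁, hsubJ₁⟩ := hind.subset_isBasis_of_subset
    (Set.union_subset (hI₁.subset.trans Set.subset_union_left) Set.subset_union_right) hAX
  have hfinJ : J.Finite := M.set_finite J hJ.indep.subset_ground
  have hfinJ₁ : J₁.Finite := M.set_finite J₁ hJ₁.indep.subset_ground
  have hfinX : X.Finite := M.set_finite X hXE
  have hfinI₁ : I₁.Finite := M.set_finite I₁ hI₁.indep.subset_ground
  have hfinI₂ : I₂.Finite := M.set_finite I₂ hI₂.indep.subset_ground
  have hd₁ : Disjoint I₁ X := (Set.disjoint_of_subset_right hI₁.subset hXA).symm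
  have hcard1 : I₁.ncard + X.ncard ≤ J₁.ncard := by
    rw [← Set.ncard_union_eq hd₁ hfinI₁ hfinX]
    exact Set.ncard_le_ncard hsubJ₁ hfinJ₁
  have hcard2 : J₁.ncard = J.ncard := basis_ncard_eq hJ₁ hJ
  have hcard3 : J.ncard = I₂.ncard + (J \ A).ncard := by
    have hsplit : J = (J ∩ A) ∪ (J \ A) := (Set.inter_union_diff J A).symm
    calc J.ncard = ((J ∩ A) ∪ (J \ A)).ncard := by rw [← hsplit]
      _ = (J ∩ A).ncard + (J \ A).ncard :=
          Set.ncard_union_eq (Set.disjoint_left.2 fun x hx hx2 => hx2.2 hx.2)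
            (hfinJ.inter_of_left _) (hfinJ.diff)
      _ = I₂.ncard + (J \ A).ncard := by rw [hJA]
  have hcard4 : I₁.ncard = I₂.ncard := basis_ncard_eq hI₁ hI₂
  have hcard5 : X.ncard ≤ (J \ A).ncard := by omega
  have hXeq : J \ A = X :=
    Set.eq_of_subset_of_ncard_le hJdiff hcard5 hfinX
  have hJeq : J = I₂ ∪ X := by
    rw [← hXeq, ← hJA]
    exact (Set.inter_union_diff J A).symm
  rw [← hJeq]
  exact hJ.indep



lemma N_indep_iff (hNB : ∀ B, N.IsBase B ↔ MinTwistMem M A B) (hA : A ⊆ M.E) {X : Set α} :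
    N.Indep X ↔ ∃ B, M.IsBase B ∧ M.IsBasis (A ∩ B) A ∧ X ⊆ A ∆ B := by
  rw [Matroid.indep_iff]
  constructor
  · rintro ⟨F, hF, hXF⟩
    obtain ⟨B, hB, hbasis, rfl⟩ := (minTwistMem_iff hA).1 ((hNB F).1 hF)
    exact ⟨B, hB, hbasis, hXF⟩
  · rintro ⟨B, hB, hbasis, hXB⟩
    exact ⟨A ∆ B, (hNB _).2 ((minTwistMem_iff hA).2 ⟨B, hB, hbasis, rfl⟩), hXB⟩

lemma N_indep_inA (hNB : ∀ B, N.IsBase B ↔ MinTwistMem M A B) (hA : A ⊆ M.E) {X : Set α} (hXA : X ⊆ A) :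
    N.Indep X ↔ ∃ I, M.IsBasis I A ∧ Disjoint X I := by
  rw [N_indep_iff hNB hA]
  constructor
  · rintro ⟨B, hB, hbasis, hXB⟩
    refine ⟨A ∩ B, hbasis, Set.disjoint_left.2 fun x hx hx2 => ?_⟩
    rcases hXB hx with ⟨_, hnB⟩ | ⟨_, hnA⟩
    · exact hnB hx2.2
    · exact hnA hx2.1
  · rintro ⟨I, hI, hdisj⟩
    obtain ⟨B, hB, hIB⟩ := hI.indep.exists_isBase_superset
    have h5 : A ∩ B = I := base_inter_basis_of_basis_subset hI hB hIB
    refine ⟨B, hB, h5 ▸ hI, fun x hx => Or.inl ⟨hXA hx, fun hxB => ?_⟩⟩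
    exact Set.disjoint_left.1 hdisj hx (h5 ▸ (⟨hXA hx, hxB⟩ : x ∈ A ∩ B))

lemma N_indep_out (hNB : ∀ B, N.IsBase B ↔ MinTwistMem M A B) (hA : A ⊆ M.E) {X : Set α} (hXE : X ⊆ M.E) (hXA : Disjoint X A) :
    N.Indep X ↔ ∃ I, M.IsBasis I A ∧ M.Indep (I ∪ X) := by
  rw [N_indep_iff hNB hA]
  constructor
  · rintro ⟨B, hB, hbasis, hXB⟩
    refine ⟨A ∩ B, hbasis, hB.indep.subset (Set.union_subset Set.inter_subset_right
      fun x hx => ?_)⟩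
    rcases hXB hx with ⟨hxA, _⟩ | ⟨hxB, _⟩
    · exact absurd hxA (Set.disjoint_left.1 hXA hx)
    · exact hxB
  · rintro ⟨I, hI, hind⟩
    obtain ⟨B, hB, hsub⟩ := hind.exists_isBase_superset
    have h5 : A ∩ B = I :=
      base_inter_basis_of_basis_subset hI hB (Set.subset_union_left.trans hsub)
    refine ⟨B, hB, h5 ▸ hI, fun x hx =>
      Or.inr ⟨hsub (Or.inr hx), Set.disjoint_left.1 hXA hx⟩⟩

lemma N_indep_out' (hNB : ∀ B, N.IsBase B ↔ MinTwistMem M A B) (hA : A ⊆ M.E) {X I : Set α} (hXE : X ⊆ M.E) (hXA : Disjoint X A)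
    (hI : M.IsBasis I A) (hX : N.Indep X) : M.Indep (I ∪ X) := by
  obtain ⟨I₂, hI₂, hind₂⟩ := (N_indep_out hNB hA hXE hXA).1 hX
  exact contr_indep_exchange hI₂ hI hXE hXA hind₂

lemma N_indep_split (hNB : ∀ B, N.IsBase B ↔ MinTwistMem M A B) (hA : A ⊆ M.E) {X : Set α} (hXE : X ⊆ M.E)
    (h1 : N.Indep (X ∩ A)) (h2 : N.Indep (X \ A)) : N.Indep X := by
  obtain ⟨I, hI, hdisjXI⟩ := (N_indep_inA hNB hA Set.inter_subset_right).1 h1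
  have hXdA : Disjoint (X \ A) A := Set.disjoint_left.2 fun x hx => hx.2
  have hind : M.Indep (I ∪ (X \ A)) :=
    N_indep_out' hNB hA (Set.diff_subset.trans hXE) hXdA hI h2
  obtain ⟨B, hB, hsub⟩ := hind.exists_isBase_superset
  have h5 : A ∩ B = I :=
    base_inter_basis_of_basis_subset hI hB (Set.subset_union_left.trans hsub)
  refine (N_indep_iff hNB hA).2 ⟨B, hB, h5 ▸ hI, fun x hx => ?_⟩
  by_cases hxA : x ∈ A
  · refine Or.inl ⟨hxA, fun hxB => ?_⟩
    exact Set.disjoint_left.1 hdisjXI ⟨hx, hxA⟩ (h5 ▸ (⟨hxA, hxB⟩ : x ∈ A ∩ B))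
  · exact Or.inr ⟨hsub (Or.inr ⟨hx, hxA⟩), hxA⟩

lemma N_circuit_cases (hNB : ∀ B, N.IsBase B ↔ MinTwistMem M A B) (hA : A ⊆ M.E) (hNE : N.E = M.E) {C : Set α}
    (hC : IsCircuit N C) : C ⊆ A ∨ C ⊆ M.E \ A := by
  have hCE : C ⊆ M.E := hNE ▸ hC.1
  by_cases h1 : C ⊆ A
  · exact Or.inl h1
  by_cases h2 : C ⊆ M.E \ A
  · exact Or.inr h2
  exfalso
  rw [Set.not_subset] at h1 h2
  obtain ⟨a, haC, haA⟩ := h1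
  obtain ⟨b, hbC, hbA⟩ := h2
  have hbA' : b ∈ A := by
    by_contra h
    exact hbA ⟨hCE hbC, h⟩
  have hi1 : N.Indep (C ∩ A) :=
    hC.2.2 _ ⟨Set.inter_subset_left, fun h => haA (h haC).2⟩
  have hi2 : N.Indep (C \ A) :=
    hC.2.2 _ ⟨Set.diff_subset, fun h => (h hbC).2 hbA'⟩
  exact hC.2.1 (N_indep_split hNB hA hCE hi1 hi2)

lemma circuit_congr {M₁ M₂ : Matroid α} {P C : Set α} (hP₂ : P ⊆ M₂.E)
    (h : ∀ X, X ⊆ P → (M₁.Indep X ↔ M₂.Indep X)) (hC : C ⊆ P) :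
    IsCircuit M₁ C → IsCircuit M₂ C := by
  rintro ⟨h1, h2, h3⟩
  exact ⟨hC.trans hP₂, fun hi => h2 ((h C hC).2 hi),
    fun X hX => (h X (hX.subset.trans hC)).1 (h3 X hX)⟩

lemma N_restrict_dual_agree (hNB : ∀ B, N.IsBase B ↔ MinTwistMem M A B) (hA : A ⊆ M.E) {X : Set α} (hXA : X ⊆ A) :
    N.Indep X ↔ ((M ↾ A)✶).Indep X := by
  rw [N_indep_inA hNB hA hXA, Matroid.dual_indep_iff_exists']
  constructor
  · rintro ⟨I, hI, hdisj⟩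
    exact ⟨by rwa [Matroid.restrict_ground_eq], I, hI.restrict_isBase, hdisj⟩
  · rintro ⟨hXA', B', hB', hdisj⟩
    rw [Matroid.isBase_restrict_iff'] at hB'
    exact ⟨B', hB'.isBasis hA, hdisj⟩


lemma N_contr_dual_agree (hNB : ∀ B, N.IsBase B ↔ MinTwistMem M A B) (hA : A ⊆ M.E)
    {X : Set α} (hX : X ⊆ M.E \ A) :
    N.Indep X ↔ ((M✶ ↾ (M.E \ A))✶).Indep X := by
  have hXE : X ⊆ M.E := hX.trans Set.diff_subset
  have hXA : Disjoint X A := Set.disjoint_left.2 fun x hx => (hX hx).2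
  have hdAE : M.E \ A ⊆ M✶.E := by rw [Matroid.dual_ground]; exact Set.diff_subset
  rw [N_indep_out hNB hA hXE hXA, Matroid.dual_indep_iff_exists']
  constructor
  · rintro ⟨I, hI, hind⟩
    obtain ⟨B, hB, hsub⟩ := hind.exists_isBase_superset
    have hIB : I ⊆ B := Set.subset_union_left.trans hsub
    have hAB : A ∩ B = I := base_inter_basis_of_basis_subset hI hB hIB
    set B' := M.E \ (A ∪ B) with hB'def
    have hB'E : B' ⊆ M.E := Set.diff_subset
    have hB'EA : B' ⊆ M.E \ A := fun x hx => ⟨hx.1, fun hA' => hx.2 (Or.inl hA')⟩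
    refine ⟨by rw [Matroid.restrict_ground_eq]; exact hX, B', ?_, ?_⟩
    · rw [Matroid.isBase_restrict_iff', Matroid.isBasis'_iff_isBasis hdAE]
      have hind' : M✶.Indep B' := by
        rw [Matroid.dual_indep_iff_exists hB'E]
        exact ⟨B, hB, Set.disjoint_left.2 fun x hx hxB => hx.2 (Or.inr hxB)⟩
      refine hind'.isBasis_of_forall_insert hB'EA ?_
      intro x hx
      have hxE : x ∈ M.E := hx.1.1
      have hxA : x ∉ A := hx.1.2
      have hxB : x ∈ B := by
        by_contra hxB
        exact hx.2 ⟨hxE, fun h => h.elim hxA hxB⟩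
      constructor
      · intro hcon
        rw [Matroid.dual_indep_iff_exists
          (Set.insert_subset hxE hB'E)] at hcon
        obtain ⟨B₂, hB₂, hdisj₂⟩ := hcon
        have hxB₂ : x ∉ B₂ := fun h =>
          Set.disjoint_left.1 hdisj₂ (Set.mem_insert _ _) h
        have hB₂sub : ∀ y ∈ B₂, y ∈ A ∪ B := by
          intro y hy
          by_contra hyAB
          exact Set.disjoint_left.1 hdisj₂
            (Set.mem_insert_of_mem _ ⟨hB₂.subset_ground hy, hyAB⟩) hy
        have hfinB : B.Finite := M.set_finite B hB.subset_ground
        have hfinB₂ : B₂.Finite := M.set_finite B₂ hB₂.subset_ground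
        have c1 : (B₂ ∩ A).ncard ≤ I.ncard :=
          indep_ncard_le_basis (hB₂.indep.inter_right A) Set.inter_subset_right hI
        have c2 : B₂ \ A ⊆ (B \ A) \ {x} := by
          rintro y ⟨hy, hyA⟩
          exact ⟨⟨(hB₂sub y hy).resolve_left hyA, hyA⟩,
            fun h => hxB₂ (by rw [Set.mem_singleton_iff] at h; rw [← h]; exact hy)⟩
        have c3 : (B₂ \ A).ncard < (B \ A).ncard := by
          have h1 : (B₂ \ A).ncard ≤ ((B \ A) \ {x}).ncard :=
            Set.ncard_le_ncard c2 ((hfinB.diff).diff)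
          have h2 : ((B \ A) \ {x}).ncard < (B \ A).ncard := by
            apply Set.ncard_lt_ncard _ (hfinB.diff)
            rw [Set.ssubset_iff_of_subset Set.diff_subset]
            exact ⟨x, ⟨hxB, hxA⟩, fun h => h.2 rfl⟩
          omega
        have c4 : B.ncard = I.ncard + (B \ A).ncard := by
          have hsplit : B = (B ∩ A) ∪ (B \ A) := (Set.inter_union_diff B A).symm
          calc B.ncard = ((B ∩ A) ∪ (B \ A)).ncard := by rw [← hsplit]
            _ = (B ∩ A).ncard + (B \ A).ncard :=
                Set.ncard_union_eq (Set.disjoint_left.2 fun y hy hy2 => hy2.2 hy.2)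
                  (hfinB.inter_of_left _) (hfinB.diff)
            _ = I.ncard + (B \ A).ncard := by rw [Set.inter_comm, hAB]
        have c5 : B₂.ncard = (B₂ ∩ A).ncard + (B₂ \ A).ncard := by
          have hsplit : B₂ = (B₂ ∩ A) ∪ (B₂ \ A) := (Set.inter_union_diff B₂ A).symm
          calc B₂.ncard = ((B₂ ∩ A) ∪ (B₂ \ A)).ncard := by rw [← hsplit]
            _ = (B₂ ∩ A).ncard + (B₂ \ A).ncard :=
                Set.ncard_union_eq (Set.disjoint_left.2 fun y hy hy2 => hy2.2 hy.2)
                  (hfinB₂.inter_of_left _) (hfinB₂.diff)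
        have c6 : B₂.ncard = B.ncard := hB₂.ncard_eq_ncard_of_isBase hB
        omega
      · rw [Matroid.dual_ground]
        exact Set.insert_subset hxE hB'E
    · exact Set.disjoint_left.2 fun y hy hy2 => hy2.2 (Or.inr (hsub (Or.inr hy)))
  · rintro ⟨hXgr, B', hB', hdisjXB'⟩
    rw [Matroid.isBase_restrict_iff', Matroid.isBasis'_iff_isBasis hdAE] at hB'
    have hB'E : B' ⊆ M.E := hB'.subset.trans Set.diff_subset
    have hB'ind := hB'.indep
    rw [Matroid.dual_indep_iff_exists hB'E] at hB'ind
    obtain ⟨B₀, hB₀, hdisjB'B₀⟩ := hB'ind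
    have hclaim : ∀ B₂, M.IsBase B₂ → Disjoint B₂ B' → X ⊆ B₂ := by
      intro B₂ hB₂ hdisj x hx
      by_contra hxB₂
      have hins : M✶.Indep (insert x B') := by
        rw [Matroid.dual_indep_iff_exists (Set.insert_subset (hXE hx) hB'E)]
        refine ⟨B₂, hB₂, Set.disjoint_left.2 ?_⟩
        rintro y (rfl | hyB') hyB₂
        · exact hxB₂ hyB₂
        · exact Set.disjoint_left.1 hdisj hyB₂ hyB'
      have heq : B' = insert x B' :=
        hB'.eq_of_subset_indep hins (Set.subset_insert _ _)
          (Set.insert_subset (hX hx) hB'.subset)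
      have hxB' : x ∈ B' := by rw [heq]; exact Set.mem_insert _ _
      exact Set.disjoint_left.1 hdisjXB' hx hxB'
    obtain ⟨I₀, hI₀⟩ := M.exists_isBasis A hA
    obtain ⟨B, hB, hI₀B, hBsub⟩ := hI₀.indep.exists_isBase_subset_union_isBase hB₀
    have hdisjBB' : Disjoint B B' := by
      refine Set.disjoint_left.2 fun y hy hyB' => ?_
      rcases hBsub hy with hyI | hyB₀
      · exact (hB'.subset hyB').2 (hI₀.subset hyI)
      · exact Set.disjoint_left.1 hdisjB'B₀ hyB' hyB₀
    have hXB : X ⊆ B := hclaim B hB hdisjBB'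
    exact ⟨I₀, hI₀, hB.indep.subset (Set.union_subset hI₀B hXB)⟩

end Comb

lemma goodRep_restrict {V : Type} [AddCommGroup V] [Module (ZMod 2) V]
    {M : Matroid α} {φ : α → V} (hrep : GoodRep M φ) {R : Set α} (hR : R ⊆ M.E) :
    GoodRep (M ↾ R) φ := by
  intro I hIE
  rw [Matroid.restrict_ground_eq] at hIE
  rw [Matroid.restrict_indep_iff, and_iff_left hIE]
  exact hrep (hIE.trans hR)

theorem bipartite_twist_min_iff' (M : Matroid α) [M.Finite] (hbin : Binary M)
    (hbip : Bipartite M) (A : Set α) (hA : A ⊆ M.E)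
    (N : Matroid α) (hNE : N.E = M.E) (hNB : ∀ B, N.IsBase B ↔ MinTwistMem M A B) :
    Bipartite N ↔ A ∈ BicycleSpace M := by
  obtain ⟨V, _, _, φ, hφ⟩ := hbin
  have hrep : GoodRep M φ := by
    intro I hIE
    rw [hφ I hIE, linearIndependent_zmod2_iff (M.set_finite I hIE)]
    rfl
  haveI : N.Finite := ⟨hNE ▸ M.ground_finite⟩
  haveI hMAfin : (M ↾ A).Finite := Matroid.restrict_finite (M.set_finite A hA)
  haveI hMDRfin : (M✶ ↾ (M.E \ A)).Finite :=
    Matroid.restrict_finite (M.ground_finite.diff)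
  have hrepA : GoodRep (M ↾ A) φ := goodRep_restrict hrep hA
  have hrepD : GoodRep M✶ (dualPsi M φ) := dual_goodRep hrep
  have hrepDR : GoodRep (M✶ ↾ (M.E \ A)) (dualPsi M φ) :=
    goodRep_restrict hrepD (by rw [Matroid.dual_ground]; exact Set.diff_subset)
  -- circuit bridges
  have hcircA : ∀ C, C ⊆ A → (IsCircuit N C ↔ IsCircuit ((M ↾ A)✶) C) := by
    intro C hC
    constructor
    · exact circuit_congr (by rw [Matroid.dual_ground, Matroid.restrict_ground_eq])
        (fun X hX => N_restrict_dual_agree hNB hA hX) hC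
    · exact circuit_congr (by rw [hNE]; exact hA)
        (fun X hX => (N_restrict_dual_agree hNB hA hX).symm) hC
  have hcircD : ∀ C, C ⊆ M.E \ A → (IsCircuit N C ↔ IsCircuit ((M✶ ↾ (M.E \ A))✶) C) := by
    intro C hC
    constructor
    · exact circuit_congr (by rw [Matroid.dual_ground, Matroid.restrict_ground_eq])
        (fun X hX => N_contr_dual_agree hNB hA hX) hC
    · exact circuit_congr (by rw [hNE]; exact Set.diff_subset)
        (fun X hX => (N_contr_dual_agree hNB hA hX).symm) hC
  -- σ✶ of the ground set vanishes since M is bipartite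
  have hE0 : sig (dualPsi M φ) M.E = 0 := by
    rw [sig_dualPsi_eq_zero_iff M.ground_finite]
    intro T hTE hT0
    rw [Set.inter_eq_self_of_subset_right hTE]
    obtain ⟨𝒞, h1, h2, h3⟩ := (circuitSpace_iff hrep).2 ⟨hTE, hT0⟩
    rw [h3]
    have h4 := even_inter_sUnion (X := ⋃₀ (↑𝒞 : Set (Set α))) 𝒞
      (fun C hC => M.set_finite C (h1 C hC).1)
      (by rw [← h3]; exact M.set_finite T hTE) h2
      (fun C hC => by
        rw [Set.inter_eq_self_of_subset_right
          (Set.subset_sUnion_of_mem (Finset.mem_coe.2 hC))]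
        exact hbip C (h1 C hC))
    rwa [Set.inter_self] at h4
  have hsplit := sig_union (φ := dualPsi M φ) (M.ground_finite.diff (t := A)) (M.set_finite A hA)
    (Set.disjoint_left.2 fun x (hx : x ∈ M.E \ A) => hx.2)
  rw [Set.diff_union_of_subset hA] at hsplit
  constructor
  · intro hbipN
    have hsigA : sig φ A = 0 := by
      have hcoc : ∀ C, IsCircuit ((M ↾ A)✶) C → Even C.ncard := by
        intro C hC
        have hCA : C ⊆ A := by
          have h := hC.1
          rwa [Matroid.dual_ground, Matroid.restrict_ground_eq] at h
        exact hbipN C ((hcircA C hCA).2 hC)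
      have h0 := sig_ground_eq_zero_of_cocircuits_even hrepA hcoc
      rwa [Matroid.restrict_ground_eq] at h0
    have hsigDA : sig (dualPsi M φ) A = 0 := by
      have hcoc : ∀ C, IsCircuit ((M✶ ↾ (M.E \ A))✶) C → Even C.ncard := by
        intro C hC
        have hCD : C ⊆ M.E \ A := by
          have h := hC.1
          rwa [Matroid.dual_ground, Matroid.restrict_ground_eq] at h
        exact hbipN C ((hcircD C hCD).2 hC)
      have h0 := sig_ground_eq_zero_of_cocircuits_even hrepDR hcoc
      rw [Matroid.restrict_ground_eq] at h0
      rw [hE0, h0, zero_add] at hsplit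
      exact hsplit.symm
    exact ⟨(circuitSpace_iff hrep).2 ⟨hA, hsigA⟩,
      (circuitSpace_iff hrepD).2 ⟨by rw [Matroid.dual_ground]; exact hA, hsigDA⟩⟩
  · rintro ⟨hAc, hAcc⟩ C hC
    have hCE : C ⊆ M.E := hNE ▸ hC.1
    rcases N_circuit_cases hNB hA hNE hC with hCA | hCD
    · have hC' : IsCircuit ((M ↾ A)✶) C := (hcircA C hCA).1 hC
      have hperp : Perp (M ↾ A) φ C := cocircuit_perp hrepA hC'
      have hsigA : sig φ A = 0 := ((circuitSpace_iff hrep).1 hAc).2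
      have h := hperp.2 A (by rw [Matroid.restrict_ground_eq]) hsigA
      rwa [Set.inter_eq_self_of_subset_left hCA] at h
    · have hC' : IsCircuit ((M✶ ↾ (M.E \ A))✶) C := (hcircD C hCD).1 hC
      have hperp : Perp (M✶ ↾ (M.E \ A)) (dualPsi M φ) C := cocircuit_perp hrepDR hC'
      have hsigDA : sig (dualPsi M φ) A = 0 := ((circuitSpace_iff hrepD).1 hAcc).2
      have hsigD : sig (dualPsi M φ) (M.E \ A) = 0 := by
        rw [hE0, hsigDA, add_zero] at hsplit
        exact hsplit.symm
      have h := hperp.2 (M.E \ A) (by rw [Matroid.restrict_ground_eq]) hsigD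
      rwa [Set.inter_eq_self_of_subset_left hCD] at h

/-- For a binary bipartite matroid `M` and `A ⊆ E`, the matroid `(M*A)_min` is
bipartite iff `A` belongs to the bicycle space of `M`. -/
theorem bipartite_twist_min_iff (M : Matroid α) [M.Finite] (hbin : Binary M)
    (hbip : Bipartite M) (A : Set α) (hA : A ⊆ M.E)
    (N : Matroid α) (hNE : N.E = M.E) (hNB : ∀ B, N.IsBase B ↔ MinTwistMem M A B) :
    Bipartite N ↔ A ∈ BicycleSpace M := by
  exact bipartite_twist_min_iff' M hbin hbip A hA N hNE hNB

end PaperMatroid
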